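/- Under the standing assumption, let p⁰ ∈ S_𝓖 have all marginals positive (p⁰ᵢ(a) > 0 for every locus i and allele a ∈ 𝓐ᵢ). Then the stoichiometric compatibility class S(p⁰) contains exactly one equilibrium of the recombination dynamics; this equilibrium has all coordinates strictly positive and is detailed-balancing (p(g)p(h) = p(g_I h_J)p(g_J h_I) for all g,h ∈ 𝓖 and {I,J} ∈ 𝓟), and S(p⁰) contains no equilibrium on the boundary of ℝ^𝓖_{≥0}. -/

import Mathlib

set_option linter.unusedSectionVars false
set_option linter.unusedVariables false
set_option maxHeartbeats 1000000


open Finset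

/-- Recombination of gametes `g` and `h` following pattern `{I, Iᶜ}`:
`(g_I h_J)ᵢ = gᵢ` for `i ∈ I` and `= hᵢ` for `i ∈ J = Iᶜ`. -/
def recomb {L : Type} [DecidableEq L] {A : L → Type} (I : Finset L)
    (g h : ∀ i, A i) : ∀ i, A i :=
  fun i => if i ∈ I then g i else h i

/-- The recombination vector field
`F(p) = (1/2) Σ_{g,h} Σ_{{I,J} ∈ 𝓟} c({I,J}) p(g) p(h) (g_I h_J + g_J h_I − g − h)`,
where the sum over unordered patterns `{I,J}` is written as `(1/2) Σ_{I : Finset L}`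
(every unordered pattern `{I, Iᶜ}` corresponds to exactly two subsets `I` and `Iᶜ`;
the rate constants satisfy `c I = c Iᶜ`). -/
noncomputable def recF {L : Type} [Fintype L] [DecidableEq L] {A : L → Type}
    [∀ i, Fintype (A i)] [∀ i, DecidableEq (A i)]
    (c : Finset L → ℝ) (p : (∀ i, A i) → ℝ) : (∀ i, A i) → ℝ :=
  fun x => (1 / 4) * ∑ g : ∀ i, A i, ∑ h : ∀ i, A i, ∑ I : Finset L,
    c I * p g * p h *
      ((if x = recomb I g h then 1 else 0) + (if x = recomb Iᶜ g h then 1 else 0)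
        - (if x = g then 1 else 0) - (if x = h then 1 else 0))

/-- The marginal frequency `pᵢ(a) = Σ_{g : gᵢ = a} p(g)`. -/
noncomputable def marg {L : Type} [Fintype L] [DecidableEq L] {A : L → Type}
    [∀ i, Fintype (A i)] [∀ i, DecidableEq (A i)]
    (p : (∀ i, A i) → ℝ) (i : L) (a : A i) : ℝ :=
  ∑ g : ∀ j, A j, if g i = a then p g else 0

/-- The stoichiometric subspace
`S = span { g_I h_J + g_J h_I − g − h : g,h ∈ 𝓖, {I,J} ∈ 𝓟 with c({I,J}) > 0 }`,
gametes being identified with standard basis vectors of `ℝ^𝓖`. -/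
def stoichSpan {L : Type} [Fintype L] [DecidableEq L] (A : L → Type)
    [∀ i, Fintype (A i)] [∀ i, DecidableEq (A i)]
    (c : Finset L → ℝ) : Submodule ℝ ((∀ i, A i) → ℝ) :=
  Submodule.span ℝ
    { v | ∃ (g h : ∀ i, A i) (I : Finset L), 0 < c I ∧
        v = fun x => (if x = recomb I g h then (1 : ℝ) else 0)
          + (if x = recomb Iᶜ g h then 1 else 0)
          - (if x = g then 1 else 0) - (if x = h then 1 else 0) }


namespace RecombAux
variable {L : Type} [Fintype L] [DecidableEq L] {A : L → Type}
  [∀ i, Fintype (A i)] [∀ i, DecidableEq (A i)]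




lemma recomb_compl (I : Finset L) (g h : ∀ i, A i) : recomb Iᶜ g h = recomb I h g := by
  funext i; simp only [recomb, Finset.mem_compl]; by_cases hi : i ∈ I <;> simp [hi]

lemma recomb_univ (g h : ∀ i, A i) : recomb (univ : Finset L) g h = g := by
  funext i; simp [recomb]

lemma recomb_empty (g h : ∀ i, A i) : recomb (∅ : Finset L) g h = h := by
  funext i; simp [recomb]

lemma recomb_left (I : Finset L) (g h : ∀ i, A i) :
    recomb I (recomb I g h) (recomb Iᶜ g h) = g := by
  funext i; simp only [recomb, Finset.mem_compl]; by_cases hi : i ∈ I <;> simp [hi]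

lemma recomb_right (I : Finset L) (g h : ∀ i, A i) :
    recomb Iᶜ (recomb I g h) (recomb Iᶜ g h) = h := by
  funext i; simp only [recomb, Finset.mem_compl]; by_cases hi : i ∈ I <;> simp [hi]

/-- The recombination involution on pairs of gametes. -/
def phi (I : Finset L) : ((∀ i, A i) × (∀ i, A i)) ≃ ((∀ i, A i) × (∀ i, A i)) where
  toFun z := (recomb I z.1 z.2, recomb Iᶜ z.1 z.2)
  invFun z := (recomb I z.1 z.2, recomb Iᶜ z.1 z.2)
  left_inv z := by simp [recomb_left, recomb_right]
  right_inv z := by simp [recomb_left, recomb_right]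

lemma sum_reindex (I : Finset L) (p : (∀ i, A i) → ℝ) (x : ∀ i, A i) :
    ∑ g : ∀ i, A i, ∑ h : ∀ i, A i, p g * p h * (if x = recomb I g h then (1:ℝ) else 0)
    = ∑ h : ∀ i, A i, p (recomb I x h) * p (recomb Iᶜ x h) := by
  calc ∑ g : ∀ i, A i, ∑ h : ∀ i, A i, p g * p h * (if x = recomb I g h then (1:ℝ) else 0)
      = ∑ z : (∀ i, A i) × (∀ i, A i), p z.1 * p z.2 * (if x = recomb I z.1 z.2 then (1:ℝ) else 0) := by
        rw [Fintype.sum_prod_type]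
    _ = ∑ z : (∀ i, A i) × (∀ i, A i),
          p (recomb I z.1 z.2) * p (recomb Iᶜ z.1 z.2) * (if x = z.1 then (1:ℝ) else 0) := by
        apply Fintype.sum_equiv (phi I)
        intro z
        simp only [phi, Equiv.coe_fn_mk, recomb_left, recomb_right]
        congr
    _ = ∑ g : ∀ i, A i, ∑ h : ∀ i, A i,
          p (recomb I g h) * p (recomb Iᶜ g h) * (if x = g then (1:ℝ) else 0) := by
        rw [Fintype.sum_prod_type]
    _ = ∑ g : ∀ i, A i, (if x = g then ∑ h : ∀ i, A i, p (recomb I g h) * p (recomb Iᶜ g h) else 0) := by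
        refine Finset.sum_congr rfl fun g _ => ?_
        by_cases hg : x = g
        · simp [hg]
        · simp [hg]
    _ = ∑ h : ∀ i, A i, p (recomb I x h) * p (recomb Iᶜ x h) := by
        rw [Finset.sum_ite_eq]; simp

lemma sum_diag_left (p : (∀ i, A i) → ℝ) (x : ∀ i, A i) :
    ∑ g : ∀ i, A i, ∑ h : ∀ i, A i, p g * p h * (if x = g then (1:ℝ) else 0)
    = p x * ∑ h : ∀ i, A i, p h := by
  calc ∑ g : ∀ i, A i, ∑ h : ∀ i, A i, p g * p h * (if x = g then (1:ℝ) else 0)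
      = ∑ g : ∀ i, A i, (if x = g then p g * ∑ h : ∀ i, A i, p h else 0) := by
        refine Finset.sum_congr rfl fun g _ => ?_
        by_cases hg : x = g <;> simp [hg, Finset.mul_sum]
    _ = p x * ∑ h : ∀ i, A i, p h := by rw [Finset.sum_ite_eq]; simp

lemma sum_diag_right (p : (∀ i, A i) → ℝ) (x : ∀ i, A i) :
    ∑ g : ∀ i, A i, ∑ h : ∀ i, A i, p g * p h * (if x = h then (1:ℝ) else 0)
    = p x * ∑ h : ∀ i, A i, p h := by
  rw [Finset.sum_comm]
  calc ∑ h : ∀ i, A i, ∑ g : ∀ i, A i, p g * p h * (if x = h then (1:ℝ) else 0)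
      = ∑ h : ∀ i, A i, ∑ g : ∀ i, A i, p h * p g * (if x = h then (1:ℝ) else 0) := by
        refine Finset.sum_congr rfl fun h _ => Finset.sum_congr rfl fun g _ => by ring
    _ = p x * ∑ h : ∀ i, A i, p h := sum_diag_left p x

lemma recF_eq (c : Finset L → ℝ) (p : (∀ i, A i) → ℝ) (x : ∀ i, A i) :
    recF c p x = (1/2) * ∑ I : Finset L, c I *
      ∑ h : ∀ i, A i, (p (recomb I x h) * p (recomb Iᶜ x h) - p x * p h) := by
  have key : ∀ I : Finset L,
      (∑ g : ∀ i, A i, ∑ h : ∀ i, A i, c I * p g * p h *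
        ((if x = recomb I g h then (1:ℝ) else 0) + (if x = recomb Iᶜ g h then 1 else 0)
          - (if x = g then 1 else 0) - (if x = h then 1 else 0)))
      = 2 * (c I * ∑ h : ∀ i, A i,
          (p (recomb I x h) * p (recomb Iᶜ x h) - p x * p h)) := by
    intro I
    have expand : ∀ g h : ∀ i, A i, c I * p g * p h *
        ((if x = recomb I g h then (1:ℝ) else 0) + (if x = recomb Iᶜ g h then 1 else 0)
          - (if x = g then 1 else 0) - (if x = h then 1 else 0))
        = c I * (p g * p h * (if x = recomb I g h then (1:ℝ) else 0))
          + c I * (p g * p h * (if x = recomb Iᶜ g h then (1:ℝ) else 0))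
          - (c I * (p g * p h * (if x = g then (1:ℝ) else 0))
          + c I * (p g * p h * (if x = h then (1:ℝ) else 0))) := fun g h => by ring
    simp only [expand, Finset.sum_add_distrib, Finset.sum_sub_distrib, ← Finset.mul_sum]
    rw [sum_reindex, sum_reindex, sum_diag_left, sum_diag_right]
    have : ∑ h : ∀ i, A i, p (recomb Iᶜ x h) * p (recomb Iᶜᶜ x h)
        = ∑ h : ∀ i, A i, p (recomb I x h) * p (recomb Iᶜ x h) := by
      refine Finset.sum_congr rfl fun h _ => ?_
      rw [compl_compl]; ring
    rw [this]
    ring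
  unfold recF
  have swap2 : ∑ g : ∀ i, A i, ∑ h : ∀ i, A i, ∑ I : Finset L,
      c I * p g * p h *
      ((if x = recomb I g h then (1:ℝ) else 0) + (if x = recomb Iᶜ g h then 1 else 0)
        - (if x = g then 1 else 0) - (if x = h then 1 else 0))
      = ∑ I : Finset L, ∑ g : ∀ i, A i, ∑ h : ∀ i, A i,
      c I * p g * p h *
      ((if x = recomb I g h then (1:ℝ) else 0) + (if x = recomb Iᶜ g h then 1 else 0)
        - (if x = g then 1 else 0) - (if x = h then 1 else 0)) := by
    rw [show (∑ g : ∀ i, A i, ∑ h : ∀ i, A i, ∑ I : Finset L,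
      c I * p g * p h *
      ((if x = recomb I g h then (1:ℝ) else 0) + (if x = recomb Iᶜ g h then 1 else 0)
        - (if x = g then 1 else 0) - (if x = h then 1 else 0)))
      = ∑ g : ∀ i, A i, ∑ I : Finset L, ∑ h : ∀ i, A i,
      c I * p g * p h *
      ((if x = recomb I g h then (1:ℝ) else 0) + (if x = recomb Iᶜ g h then 1 else 0)
        - (if x = g then 1 else 0) - (if x = h then 1 else 0))
      from Finset.sum_congr rfl fun g _ => Finset.sum_comm]
    exact Finset.sum_comm
  rw [swap2]
  simp only [key]
  rw [← Finset.mul_sum]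
  ring





/-- The generator vector of the stoichiometric subspace. -/
def genVec (I : Finset L) (g h : ∀ i, A i) : (∀ i, A i) → ℝ :=
  fun x => (if x = recomb I g h then (1 : ℝ) else 0)
    + (if x = recomb Iᶜ g h then 1 else 0)
    - (if x = g then 1 else 0) - (if x = h then 1 else 0)

lemma genVec_mem (c : Finset L → ℝ) {I : Finset L} (hI : 0 < c I) (g h : ∀ i, A i) :
    genVec I g h ∈ stoichSpan A c :=
  Submodule.subset_span ⟨g, h, I, hI, rfl⟩

/-- `marg` as a linear map. -/
noncomputable def margLM (i : L) (a : A i) : ((∀ j, A j) → ℝ) →ₗ[ℝ] ℝ where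
  toFun p := marg p i a
  map_add' p q := by
    simp only [marg, Pi.add_apply]
    rw [← Finset.sum_add_distrib]
    exact Finset.sum_congr rfl fun g _ => by split <;> simp
  map_smul' r p := by
    simp only [marg, Pi.smul_apply, smul_eq_mul, RingHom.id_apply]
    rw [Finset.mul_sum]
    exact Finset.sum_congr rfl fun g _ => by split <;> simp

lemma sum_ind (i : L) (a : A i) (w : ∀ j, A j) :
    (∑ g : ∀ j, A j, if g i = a then (if g = w then (1:ℝ) else 0) else 0)
      = if w i = a then 1 else 0 := by
  rw [Finset.sum_eq_single w (fun b _ hb => by simp [hb]) (fun hw => by simp at hw)]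
  simp

lemma marg_genVec (I : Finset L) (g h : ∀ i, A i) (i : L) (a : A i) :
    marg (genVec I g h) i a = 0 := by
  unfold marg
  have split : ∀ g' : ∀ j, A j, (if g' i = a then genVec I g h g' else 0)
      = (if g' i = a then (if g' = recomb I g h then (1:ℝ) else 0) else 0)
        + (if g' i = a then (if g' = recomb Iᶜ g h then (1:ℝ) else 0) else 0)
        - (if g' i = a then (if g' = g then (1:ℝ) else 0) else 0)
        - (if g' i = a then (if g' = h then (1:ℝ) else 0) else 0) := by
    intro g'; by_cases hg : g' i = a <;> simp [hg, genVec]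
  simp only [split, Finset.sum_add_distrib, Finset.sum_sub_distrib, sum_ind]
  by_cases hi : i ∈ I <;> simp [recomb, hi]

lemma span_marg_zero (c : Finset L → ℝ) {v : (∀ i, A i) → ℝ}
    (hv : v ∈ stoichSpan A c) (i : L) (a : A i) : marg v i a = 0 := by
  have hle : stoichSpan A c ≤ LinearMap.ker (margLM (A := A) i a) := by
    rw [stoichSpan, Submodule.span_le]
    rintro v ⟨g, h, I, hI, rfl⟩
    exact LinearMap.mem_ker.mpr (marg_genVec I g h i a)
  simpa [LinearMap.mem_ker, margLM] using hle hv

lemma sum_eq_sum_marg (p : (∀ i, A i) → ℝ) (i : L) :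
    ∑ x : ∀ j, A j, p x = ∑ a : A i, marg p i a := by
  unfold marg
  rw [Finset.sum_comm]
  refine Finset.sum_congr rfl fun x _ => ?_
  rw [Finset.sum_ite_eq]; simp

lemma sum_marg (p : (∀ i, A i) → ℝ) (hp1 : ∑ g : ∀ i, A i, p g = 1) (i : L) :
    ∑ a : A i, marg p i a = 1 := by rw [← sum_eq_sum_marg, hp1]

/-- The key Boolean-closure argument: a predicate on recombination patterns
that holds for `univ`, is stable under intersections, and holds for every
pattern with positive rate, holds for all singletons. -/
lemma singleton_closure (c : Finset L → ℝ) (hc : ∀ I, 0 ≤ c I)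
    (hsep : ∀ i j : L, i ≠ j →
      0 < ∑ I ∈ univ.filter (fun I : Finset L => i ∈ I ∧ j ∉ I), c I)
    (P : Finset L → Prop) (huniv : P univ)
    (hinter : ∀ I J, P I → P J → P (I ∩ J))
    (hgen : ∀ I, 0 < c I → P I) (i : L) : P {i} := by
  have hex : ∀ j : L, j ≠ i → ∃ I : Finset L, (0 < c I ∧ i ∈ I) ∧ j ∉ I := by
    intro j hj
    have h := hsep i j (Ne.symm hj)
    obtain ⟨I, hI, hne⟩ := Finset.exists_ne_zero_of_sum_ne_zero (ne_of_gt h)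
    simp only [Finset.mem_filter, Finset.mem_univ, true_and] at hI
    exact ⟨I, ⟨lt_of_le_of_ne (hc I) (Ne.symm hne), hI.1⟩, hI.2⟩
  classical
  let T : L → Finset L := fun j => if hj : j = i then univ else (hex j hj).choose
  have hTP : ∀ j, P (T j) := by
    intro j
    by_cases hj : j = i
    · simp [T, hj, huniv]
    · simpa [T, hj] using hgen _ ((hex j hj).choose_spec.1.1)
  have hTi : ∀ j, i ∈ T j := by
    intro j
    by_cases hj : j = i
    · simp [T, hj]
    · simpa [T, hj] using (hex j hj).choose_spec.1.2
  have hTj : ∀ j, j ≠ i → j ∉ T j := by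
    intro j hj
    simpa [T, hj] using (hex j hj).choose_spec.2
  have hinf : ∀ s : Finset L, P (s.inf T) := by
    intro s
    induction s using Finset.induction_on with
    | empty => simpa using huniv
    | @insert _ _ hnotmem ih =>
        rw [Finset.inf_insert]
        exact hinter _ _ (hTP _) ih
  have heq : (univ.erase i).inf T = {i} := by
    apply le_antisymm
    · intro x hx
      rw [Finset.mem_singleton]
      by_contra hxi
      have hmem : x ∈ univ.erase i := Finset.mem_erase.mpr ⟨hxi, Finset.mem_univ x⟩
      have : (univ.erase i).inf T ≤ T x := Finset.inf_le hmem
      exact hTj x hxi (this hx)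
    · exact Finset.le_inf fun j _ => Finset.singleton_subset_iff.mpr (hTi j)
  rw [← heq]; exact hinf _





/-- Summing over gametes that agree with `x` away from `i` is summing over updates. -/
lemma sum_update (i : L) (x : ∀ j, A j) (F : (∀ j, A j) → ℝ) :
    ∑ h : ∀ j, A j, (if ∀ j, j ≠ i → h j = x j then F h else 0)
      = ∑ a : A i, F (Function.update x i a) := by
  have rhs : ∀ a : A i, F (Function.update x i a)
      = ∑ h : ∀ j, A j, if h = Function.update x i a then F h else 0 := by
    intro a
    rw [Finset.sum_ite_eq' univ (Function.update x i a) F]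
    simp
  simp only [rhs]
  rw [Finset.sum_comm]
  refine Finset.sum_congr rfl fun h _ => ?_
  by_cases hcond : ∀ j, j ≠ i → h j = x j
  · rw [Finset.sum_eq_single (h i)]
    · have heq : h = Function.update x i (h i) := by
        funext j
        by_cases hj : j = i
        · subst hj; simp
        · rw [Function.update_of_ne hj]; exact hcond j hj
      rw [if_pos hcond, if_pos heq]
    · intro a _ ha
      have : h ≠ Function.update x i a := by
        intro hEq
        apply ha
        rw [hEq]; simp
      simp [this]
    · simp
  · rw [if_neg hcond]
    refine (Finset.sum_eq_zero fun a _ => ?_).symm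
    have : h ≠ Function.update x i a := by
      intro hEq
      apply hcond
      intro j hj
      rw [hEq, Function.update_of_ne hj]
    simp [this]

/-- Collapsing a sum over one allele against an agreement condition. -/
lemma sum_update_cond {i : L} {K : Finset L} (hiK : i ∉ K) (g x : ∀ j, A j)
    (F : A i → ℝ) :
    ∑ a : A i, (if ∀ j, j ∉ K → g j = Function.update x i a j then F a else 0)
      = if ∀ j, j ∉ insert i K → g j = x j then F (g i) else 0 := by
  by_cases hcond : ∀ j, j ∉ insert i K → g j = x j
  · rw [if_pos hcond, Finset.sum_eq_single (g i)]
    · have : ∀ j, j ∉ K → g j = Function.update x i (g i) j := by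
        intro j hj
        by_cases hji : j = i
        · subst hji; simp
        · rw [Function.update_of_ne hji]
          exact hcond j (by simp [hji, hj])
      rw [if_pos this]
    · intro a _ ha
      have : ¬ ∀ j, j ∉ K → g j = Function.update x i a j := by
        intro hall
        apply ha
        have := hall i hiK
        simpa using this.symm
      simp [this]
    · simp
  · rw [if_neg hcond]
    refine Finset.sum_eq_zero fun a _ => ?_
    push_neg at hcond
    obtain ⟨j, hj, hne⟩ := hcond
    have hji : j ≠ i := by rintro rfl; exact hj (Finset.mem_insert_self _ _)
    have hjK : j ∉ K := fun hjk => hj (Finset.mem_insert_of_mem hjk)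
    have : ¬ ∀ j', j' ∉ K → g j' = Function.update x i a j' := by
      intro hall
      exact hne (by rw [hall j hjK, Function.update_of_ne hji])
    simp [this]

/-- Fubini over the gamete space: a sum of a product over a set of loci,
restricted to agreement off `K`, factorizes. -/
lemma sum_agree (K : Finset L) (g : ∀ i, A i) (f : ∀ i, A i → ℝ) :
    ∑ x : ∀ i, A i, (if ∀ j, j ∉ K → x j = g j then ∏ i ∈ K, f i (x i) else 0)
      = ∏ i ∈ K, ∑ a : A i, f i a := by
  induction K using Finset.induction_on generalizing g with
  | empty =>
      rw [Finset.prod_empty]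
      calc ∑ x : ∀ i, A i, (if ∀ j, j ∉ (∅ : Finset L) → x j = g j then
              ∏ i ∈ (∅ : Finset L), f i (x i) else 0)
          = ∑ x : ∀ i, A i, (if x = g then (1:ℝ) else 0) := by
            refine Finset.sum_congr rfl fun x _ => ?_
            rw [Finset.prod_empty]
            exact if_congr (by simp [funext_iff]) rfl rfl
        _ = 1 := by rw [Finset.sum_ite_eq' univ g (fun _ => (1:ℝ))]; simp
  | @insert i K hiK ih =>
      have step1 : ∀ x : ∀ i, A i,
          (if ∀ j, j ∉ insert i K → x j = g j then ∏ i' ∈ insert i K, f i' (x i') else 0)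
          = ∑ a : A i, (if ∀ j, j ∉ K → x j = Function.update g i a j
              then f i a * ∏ i' ∈ K, f i' (x i') else 0) := by
        intro x
        rw [sum_update_cond hiK x g (fun a => f i a * ∏ i' ∈ K, f i' (x i'))]
        rw [Finset.prod_insert hiK]
      simp only [step1]
      rw [Finset.sum_comm]
      have step3 : ∀ a : A i,
          (∑ x : ∀ i, A i, if ∀ j, j ∉ K → x j = Function.update g i a j
              then f i a * ∏ i' ∈ K, f i' (x i') else 0)
          = f i a * ∏ i' ∈ K, ∑ b : A i', f i' b := by
        intro a
        rw [← ih (Function.update g i a), Finset.mul_sum]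
        refine Finset.sum_congr rfl fun x _ => ?_
        by_cases hx : ∀ j, j ∉ K → x j = Function.update g i a j <;> simp [hx]
      simp only [step3]
      rw [Finset.prod_insert hiK, ← Finset.sum_mul]





/-- Partial marginalization: sum over gametes agreeing with `x` off `K`. -/
noncomputable def margOut (K : Finset L) (p : (∀ i, A i) → ℝ) (x : ∀ i, A i) : ℝ :=
  ∑ g : ∀ j, A j, if ∀ j, j ∉ K → g j = x j then p g else 0

/-- Interpolating family between `p₀` and the product of its marginals. -/
noncomputable def pmK (p₀ : (∀ i, A i) → ℝ) (K : Finset L) : (∀ i, A i) → ℝ :=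
  fun x => (∏ i ∈ K, marg p₀ i (x i)) * margOut K p₀ x

lemma pmK_empty (p₀ : (∀ i, A i) → ℝ) : pmK p₀ ∅ = p₀ := by
  funext x
  have : margOut (∅ : Finset L) p₀ x = p₀ x := by
    unfold margOut
    calc ∑ g : ∀ j, A j, (if ∀ j, j ∉ (∅ : Finset L) → g j = x j then p₀ g else 0)
        = ∑ g : ∀ j, A j, (if g = x then p₀ g else 0) :=
          Finset.sum_congr rfl fun g _ => if_congr (by simp [funext_iff]) rfl rfl
      _ = p₀ x := by rw [Finset.sum_ite_eq' univ x p₀]; simp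
  simp [pmK, this]

lemma pmK_univ (p₀ : (∀ i, A i) → ℝ) (hp1 : ∑ g : ∀ i, A i, p₀ g = 1) :
    pmK p₀ univ = fun x => ∏ i, marg p₀ i (x i) := by
  funext x
  have : margOut (univ : Finset L) p₀ x = 1 := by
    unfold margOut
    calc ∑ g : ∀ j, A j, (if ∀ j, j ∉ (univ : Finset L) → g j = x j then p₀ g else 0)
        = ∑ g : ∀ j, A j, p₀ g := Finset.sum_congr rfl fun g _ => by simp
      _ = 1 := hp1
  simp [pmK, this]

lemma pmK_sum (p₀ : (∀ i, A i) → ℝ) (hp1 : ∑ g : ∀ i, A i, p₀ g = 1) (K : Finset L) :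
    ∑ x : ∀ i, A i, pmK p₀ K x = 1 := by
  unfold pmK margOut
  calc ∑ x : ∀ i, A i, (∏ i ∈ K, marg p₀ i (x i)) *
          ∑ g : ∀ j, A j, (if ∀ j, j ∉ K → g j = x j then p₀ g else 0)
      = ∑ x : ∀ i, A i, ∑ g : ∀ j, A j,
          (if ∀ j, j ∉ K → g j = x j then p₀ g * ∏ i ∈ K, marg p₀ i (x i) else 0) := by
        refine Finset.sum_congr rfl fun x _ => ?_
        rw [Finset.mul_sum]
        refine Finset.sum_congr rfl fun g _ => ?_
        by_cases hc : ∀ j, j ∉ K → g j = x j <;> simp [hc, mul_comm]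
    _ = ∑ g : ∀ j, A j, ∑ x : ∀ i, A i,
          (if ∀ j, j ∉ K → g j = x j then p₀ g * ∏ i ∈ K, marg p₀ i (x i) else 0) :=
        Finset.sum_comm
    _ = ∑ g : ∀ j, A j, p₀ g * ∏ i ∈ K, ∑ a : A i, marg p₀ i a := by
        refine Finset.sum_congr rfl fun g _ => ?_
        rw [← sum_agree K g (fun i a => marg p₀ i a), Finset.mul_sum]
        refine Finset.sum_congr rfl fun x _ => ?_
        by_cases hc : ∀ j, j ∉ K → g j = x j
        · rw [if_pos hc, if_pos (fun j hj => (hc j hj).symm)]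
        · rw [if_neg hc, if_neg (fun hcc => hc fun j hj => (hcc j hj).symm), mul_zero]
    _ = ∑ g : ∀ j, A j, p₀ g := by
        refine Finset.sum_congr rfl fun g _ => ?_
        rw [Finset.prod_congr rfl fun i _ => sum_marg p₀ hp1 i]
        simp
    _ = 1 := hp1

lemma pmK_marg (p₀ : (∀ i, A i) → ℝ) (hp1 : ∑ g : ∀ i, A i, p₀ g = 1)
    {K : Finset L} {i : L} (hiK : i ∉ K) (a : A i) :
    marg (pmK p₀ K) i a = marg p₀ i a := by
  unfold marg pmK margOut
  calc ∑ x : ∀ j, A j, (if x i = a then (∏ i' ∈ K, marg p₀ i' (x i')) *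
          ∑ g : ∀ j, A j, (if ∀ j, j ∉ K → g j = x j then p₀ g else 0) else 0)
      = ∑ x : ∀ j, A j, ∑ g : ∀ j, A j,
          (if x i = a then (if ∀ j, j ∉ K → g j = x j then
            p₀ g * ∏ i' ∈ K, marg p₀ i' (x i') else 0) else 0) := by
        refine Finset.sum_congr rfl fun x _ => ?_
        by_cases hx : x i = a
        · rw [if_pos hx, Finset.mul_sum]
          refine Finset.sum_congr rfl fun g _ => ?_
          rw [if_pos hx]
          by_cases hc : ∀ j, j ∉ K → g j = x j <;> simp [hc, mul_comm]
        · rw [if_neg hx]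
          exact (Finset.sum_eq_zero fun g _ => by rw [if_neg hx]).symm
    _ = ∑ g : ∀ j, A j, ∑ x : ∀ j, A j,
          (if x i = a then (if ∀ j, j ∉ K → g j = x j then
            p₀ g * ∏ i' ∈ K, marg p₀ i' (x i') else 0) else 0) := Finset.sum_comm
    _ = ∑ g : ∀ j, A j, (if g i = a then p₀ g else 0) := by
        refine Finset.sum_congr rfl fun g _ => ?_
        by_cases hga : g i = a
        · rw [if_pos hga]
          calc ∑ x : ∀ j, A j, (if x i = a then (if ∀ j, j ∉ K → g j = x j then
                  p₀ g * ∏ i' ∈ K, marg p₀ i' (x i') else 0) else 0)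
              = ∑ x : ∀ j, A j, (if ∀ j, j ∉ K → x j = g j then
                  p₀ g * ∏ i' ∈ K, marg p₀ i' (x i') else 0) := by
                refine Finset.sum_congr rfl fun x _ => ?_
                by_cases hc : ∀ j, j ∉ K → g j = x j
                · have hxi : x i = a := by rw [← hc i hiK, hga]
                  have hc' : ∀ j, j ∉ K → x j = g j := fun j hj => (hc j hj).symm
                  rw [if_pos hxi, if_pos hc, if_pos hc']
                · have hc' : ¬ ∀ j, j ∉ K → x j = g j :=
                    fun hcc => hc fun j hj => (hcc j hj).symm
                  simp [hc, hc']
              _ = p₀ g * ∏ i' ∈ K, ∑ b : A i', marg p₀ i' b := by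
                rw [← sum_agree K g (fun i' b => marg p₀ i' b), Finset.mul_sum]
                refine Finset.sum_congr rfl fun x _ => ?_
                by_cases hc : ∀ j, j ∉ K → x j = g j <;> simp [hc]
              _ = p₀ g := by
                rw [Finset.prod_congr rfl fun i' _ => sum_marg p₀ hp1 i']
                simp
        · rw [if_neg hga]
          refine Finset.sum_eq_zero fun x _ => ?_
          by_cases hx : x i = a
          · rw [if_pos hx]
            have hc : ¬ ∀ j, j ∉ K → g j = x j := by
              intro hc
              exact hga (by rw [hc i hiK, hx])
            rw [if_neg hc]
          · rw [if_neg hx]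

lemma pmK_step_margOut (p₀ : (∀ i, A i) → ℝ)
    {K : Finset L} {i : L} (hiK : i ∉ K) (x : ∀ j, A j) :
    marg p₀ i (x i) * (∑ h : ∀ j, A j, if ∀ j, j ≠ i → h j = x j then pmK p₀ K h else 0)
      = pmK p₀ (insert i K) x := by
  rw [sum_update i x (pmK p₀ K)]
  have hupd : ∀ a : A i, pmK p₀ K (Function.update x i a)
      = (∏ i' ∈ K, marg p₀ i' (x i')) * margOut K p₀ (Function.update x i a) := by
    intro a
    unfold pmK
    congr 1
    refine Finset.prod_congr rfl fun j hj => ?_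
    have : j ≠ i := fun hji => hiK (hji ▸ hj)
    rw [Function.update_of_ne this]
  simp only [hupd]
  rw [← Finset.mul_sum]
  have hsum : ∑ a : A i, margOut K p₀ (Function.update x i a)
      = margOut (insert i K) p₀ x := by
    unfold margOut
    rw [Finset.sum_comm]
    refine Finset.sum_congr rfl fun g _ => ?_
    exact sum_update_cond hiK g x (fun _ => p₀ g)
  rw [hsum]
  unfold pmK
  rw [Finset.prod_insert hiK]
  ring

/-! ### Availability of singleton recombination patterns -/

lemma genVec_univ (g h : ∀ i, A i) : genVec (univ : Finset L) g h = 0 := by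
  funext x
  simp only [genVec, recomb_univ, Finset.compl_univ, recomb_empty, Pi.zero_apply]
  ring

lemma genVec_compl (I : Finset L) (g h : ∀ i, A i) : genVec Iᶜ g h = genVec I h g := by
  funext x
  simp only [genVec, compl_compl, recomb_compl]
  ring

lemma recomb_inter₁ (I J : Finset L) (g h : ∀ i, A i) :
    recomb I (recomb J g h) h = recomb (I ∩ J) g h := by
  funext i
  simp only [recomb, Finset.mem_inter]
  by_cases hI : i ∈ I <;> by_cases hJ : i ∈ J <;> simp [hI, hJ]

lemma recomb_inter₂ (I J : Finset L) (g h : ∀ i, A i) :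
    recomb Iᶜ (recomb J g h) h = recomb (Iᶜ ∩ J) g h := by
  funext i
  simp only [recomb, Finset.mem_inter, Finset.mem_compl]
  by_cases hI : i ∈ I <;> by_cases hJ : i ∈ J <;> simp [hI, hJ]

lemma recomb_inter₃ (I J : Finset L) (g h : ∀ i, A i) :
    recomb J (recomb (I ∩ J)ᶜ g h) h = recomb (Iᶜ ∩ J) g h := by
  funext i
  simp only [recomb, Finset.mem_inter, Finset.mem_compl]
  by_cases hI : i ∈ I <;> by_cases hJ : i ∈ J <;> simp [hI, hJ]

lemma recomb_inter₄ (I J : Finset L) (g h : ∀ i, A i) :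
    recomb Jᶜ (recomb (I ∩ J)ᶜ g h) h = recomb Jᶜ g h := by
  funext i
  simp only [recomb, Finset.mem_inter, Finset.mem_compl]
  by_cases hI : i ∈ I <;> by_cases hJ : i ∈ J <;> simp [hI, hJ]

lemma genVec_inter (I J : Finset L) (g h : ∀ i, A i) :
    genVec (I ∩ J) g h
      = genVec I (recomb J g h) h + genVec J g h - genVec J (recomb (I ∩ J)ᶜ g h) h := by
  funext x
  have e1 : J ∩ (I ∩ J)ᶜ = Iᶜ ∩ J := by ext a; simp [and_comm]; tauto
  have e2 : Jᶜ ∩ (I ∩ J)ᶜ = Jᶜ := by ext a; simp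
  simp only [genVec, Pi.add_apply, Pi.sub_apply, recomb_inter₁, recomb_inter₂, e1, e2]
  ring

lemma avail_singleton (c : Finset L → ℝ) (hc : ∀ I, 0 ≤ c I)
    (hsep : ∀ i j : L, i ≠ j →
      0 < ∑ I ∈ univ.filter (fun I : Finset L => i ∈ I ∧ j ∉ I), c I)
    (i : L) (g h : ∀ i, A i) : genVec ({i} : Finset L) g h ∈ stoichSpan A c := by
  refine singleton_closure c hc hsep
    (fun I => ∀ g h : ∀ i, A i, genVec I g h ∈ stoichSpan A c) ?_ ?_ ?_ i g h
  · intro g h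
    rw [genVec_univ]
    exact zero_mem _
  · intro I J hI hJ g h
    rw [genVec_inter]
    exact sub_mem (add_mem (hI _ _) (hJ _ _)) (hJ _ _)
  · intro I hI g h
    exact genVec_mem c hI g h

/-! ### The interpolation steps lie in the stoichiometric subspace -/

lemma ind_recomb_single (i : L) (g h x : ∀ j, A j) :
    (if x = recomb ({i} : Finset L) g h then (1:ℝ) else 0)
      = (if g i = x i then (1:ℝ) else 0) * (if ∀ j, j ≠ i → h j = x j then (1:ℝ) else 0) := by
  by_cases h1 : g i = x i <;> by_cases h2 : ∀ j, j ≠ i → h j = x j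
  · have hx : x = recomb ({i} : Finset L) g h := by
      funext j
      simp only [recomb, Finset.mem_singleton]
      by_cases hj : j = i
      · subst hj; simp [h1.symm]
      · simp [hj, (h2 j hj).symm]
    rw [if_pos hx, if_pos h1, if_pos h2]; norm_num
  · have hx : x ≠ recomb ({i} : Finset L) g h := by
      intro hx
      apply h2
      intro j hj
      rw [hx]; simp [recomb, hj]
    rw [if_neg hx, if_pos h1, if_neg h2]; norm_num
  · have hx : x ≠ recomb ({i} : Finset L) g h := by
      intro hx
      apply h1
      rw [hx]; simp [recomb]
    rw [if_neg hx, if_neg h1]; norm_num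
  · have hx : x ≠ recomb ({i} : Finset L) g h := by
      intro hx
      apply h1
      rw [hx]; simp [recomb]
    rw [if_neg hx, if_neg h1]; norm_num

lemma ind_recomb_single' (i : L) (g h x : ∀ j, A j) :
    (if x = recomb ({i} : Finset L)ᶜ g h then (1:ℝ) else 0)
      = (if h i = x i then (1:ℝ) else 0) * (if ∀ j, j ≠ i → g j = x j then (1:ℝ) else 0) := by
  rw [recomb_compl]
  exact ind_recomb_single i h g x

lemma mul_ind (t : ℝ) (P : Prop) [Decidable P] :
    t * (if P then (1:ℝ) else 0) = if P then t else 0 := by split <;> simp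

lemma double_sum_genVec_single (p : (∀ i, A i) → ℝ) (i : L) (x : ∀ j, A j) :
    ∑ g : ∀ j, A j, ∑ h : ∀ j, A j, p g * p h * genVec ({i} : Finset L) g h x
      = 2 * ((∑ g : ∀ j, A j, if g i = x i then p g else 0)
          * (∑ h : ∀ j, A j, if ∀ j, j ≠ i → h j = x j then p h else 0)
        - p x * ∑ h : ∀ j, A j, p h) := by
  have expand : ∀ g h : ∀ j, A j, p g * p h * genVec ({i} : Finset L) g h x
      = ((if g i = x i then p g else 0) * (if ∀ j, j ≠ i → h j = x j then p h else 0)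
        + (if ∀ j, j ≠ i → g j = x j then p g else 0) * (if h i = x i then p h else 0))
        - (p g * p h * (if x = g then (1:ℝ) else 0) + p g * p h * (if x = h then (1:ℝ) else 0)) := by
    intro g h
    unfold genVec
    rw [ind_recomb_single, ind_recomb_single',
      ← mul_ind (p g) (g i = x i), ← mul_ind (p h) (∀ j, j ≠ i → h j = x j),
      ← mul_ind (p g) (∀ j, j ≠ i → g j = x j), ← mul_ind (p h) (h i = x i)]
    ring
  simp only [expand, Finset.sum_sub_distrib, Finset.sum_add_distrib]
  rw [← Finset.sum_mul_sum, ← Finset.sum_mul_sum, sum_diag_left, sum_diag_right]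
  ring

lemma pmK_step_mem (c : Finset L → ℝ) (hc : ∀ I, 0 ≤ c I)
    (hsep : ∀ i j : L, i ≠ j →
      0 < ∑ I ∈ univ.filter (fun I : Finset L => i ∈ I ∧ j ∉ I), c I)
    (p₀ : (∀ i, A i) → ℝ) (hp1 : ∑ g : ∀ i, A i, p₀ g = 1)
    {K : Finset L} {i : L} (hiK : i ∉ K) :
    pmK p₀ (insert i K) - pmK p₀ K ∈ stoichSpan A c := by
  have key : pmK p₀ (insert i K) - pmK p₀ K
      = ∑ g : ∀ j, A j, ∑ h : ∀ j, A j,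
          ((1/2) * pmK p₀ K g * pmK p₀ K h) • genVec ({i} : Finset L) g h := by
    funext x
    simp only [Pi.sub_apply, Finset.sum_apply, Pi.smul_apply, smul_eq_mul]
    have : ∑ g : ∀ j, A j, ∑ h : ∀ j, A j,
        (1/2) * pmK p₀ K g * pmK p₀ K h * genVec ({i} : Finset L) g h x
        = (1/2) * ∑ g : ∀ j, A j, ∑ h : ∀ j, A j,
            pmK p₀ K g * pmK p₀ K h * genVec ({i} : Finset L) g h x := by
      rw [Finset.mul_sum]
      refine Finset.sum_congr rfl fun g _ => ?_
      rw [Finset.mul_sum]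
      exact Finset.sum_congr rfl fun h _ => by ring
    rw [this, double_sum_genVec_single (pmK p₀ K) i x]
    have hm : (∑ g : ∀ j, A j, if g i = x i then pmK p₀ K g else 0)
        = marg p₀ i (x i) := pmK_marg p₀ hp1 hiK (x i)
    rw [hm, pmK_sum p₀ hp1 K, pmK_step_margOut p₀ hiK x]
    ring
  rw [key]
  exact Submodule.sum_mem _ fun g _ => Submodule.sum_mem _ fun h _ =>
    Submodule.smul_mem _ _ (avail_singleton c hc hsep i g h)

/-- The product of the marginals lies in the stoichiometric compatibility class. -/
lemma prod_sub_mem (c : Finset L → ℝ) (hc : ∀ I, 0 ≤ c I)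
    (hsep : ∀ i j : L, i ≠ j →
      0 < ∑ I ∈ univ.filter (fun I : Finset L => i ∈ I ∧ j ∉ I), c I)
    (p₀ : (∀ i, A i) → ℝ) (hp1 : ∑ g : ∀ i, A i, p₀ g = 1) :
    (fun x => ∏ i, marg p₀ i (x i)) - p₀ ∈ stoichSpan A c := by
  have hK : ∀ K : Finset L, pmK p₀ K - p₀ ∈ stoichSpan A c := by
    intro K
    induction K using Finset.induction_on with
    | empty => rw [pmK_empty]; simp only [sub_self]; exact zero_mem _
    | @insert i K hiK ih =>
        have : pmK p₀ (insert i K) - p₀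
            = (pmK p₀ (insert i K) - pmK p₀ K) + (pmK p₀ K - p₀) := by
          rw [sub_add_sub_cancel]
        rw [this]
        exact add_mem (pmK_step_mem c hc hsep p₀ hp1 hiK) ih
  have := hK univ
  rwa [pmK_univ p₀ hp1] at this

/-- Marginals of the product measure. -/
lemma marg_prod (p₀ : (∀ i, A i) → ℝ) (hp1 : ∑ g : ∀ i, A i, p₀ g = 1)
    (i : L) (a : A i) (w : ∀ j, A j) (hw : w i = a) :
    marg (fun x => ∏ j, marg p₀ j (x j)) i a = marg p₀ i a := by
  unfold marg
  calc ∑ x : ∀ j, A j, (if x i = a then ∏ j, marg p₀ j (x j) else 0)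
      = ∑ x : ∀ j, A j, (if ∀ j, j ∉ univ.erase i → x j = w j then
          marg p₀ i a * ∏ j ∈ univ.erase i, marg p₀ j (x j) else 0) := by
        refine Finset.sum_congr rfl fun x _ => ?_
        have hiff : (x i = a) ↔ (∀ j, j ∉ univ.erase i → x j = w j) := by
          constructor
          · intro hx j hj
            have : j = i := by
              by_contra hji
              exact hj (Finset.mem_erase.mpr ⟨hji, Finset.mem_univ j⟩)
            subst this; rw [hx, hw]
          · intro hall
            have := hall i (fun hmem => (Finset.mem_erase.mp hmem).1 rfl)
            rw [this, hw]
        by_cases hx : x i = a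
        · rw [if_pos hx, if_pos (hiff.mp hx)]
          rw [← Finset.mul_prod_erase univ (fun j => marg p₀ j (x j)) (Finset.mem_univ i)]
          rw [hx]
        · rw [if_neg hx, if_neg (fun hh => hx (hiff.mpr hh))]
    _ = marg p₀ i a * ∑ x : ∀ j, A j, (if ∀ j, j ∉ univ.erase i → x j = w j then
          ∏ j ∈ univ.erase i, marg p₀ j (x j) else 0) := by
        rw [Finset.mul_sum]
        refine Finset.sum_congr rfl fun x _ => ?_
        by_cases hx : ∀ j, j ∉ univ.erase i → x j = w j <;> simp [hx]
    _ = marg p₀ i a := by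
        rw [sum_agree (univ.erase i) w (fun j b => marg p₀ j b)]
        rw [Finset.prod_congr rfl fun j _ => sum_marg p₀ hp1 j]
        simp
    _ = ∑ g : ∀ j, A j, (if g i = a then p₀ g else 0) := rfl





/-! ### No boundary equilibria: full support -/

lemma equilibrium_zero_prop (c : Finset L → ℝ) (hc : ∀ I, 0 ≤ c I)
    (r : (∀ i, A i) → ℝ) (hr0 : ∀ g, 0 ≤ r g) (hF : recF c r = 0)
    {x : ∀ i, A i} (hx : r x = 0) :
    ∀ I : Finset L, 0 < c I → ∀ h : ∀ i, A i,
      r (recomb I x h) * r (recomb Iᶜ x h) = 0 := by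
  have h0 : (1/2) * ∑ I : Finset L, c I *
      ∑ h : ∀ i, A i, (r (recomb I x h) * r (recomb Iᶜ x h) - r x * r h) = 0 := by
    rw [← recF_eq]
    rw [hF]; rfl
  simp only [hx, zero_mul, sub_zero] at h0
  have hsum : ∑ I : Finset L, c I *
      ∑ h : ∀ i, A i, r (recomb I x h) * r (recomb Iᶜ x h) = 0 := by linarith
  have hterm : ∀ I : Finset L, c I *
      ∑ h : ∀ i, A i, r (recomb I x h) * r (recomb Iᶜ x h) = 0 := by
    have := (Finset.sum_eq_zero_iff_of_nonneg (fun I _ =>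
      mul_nonneg (hc I) (Finset.sum_nonneg fun h _ =>
        mul_nonneg (hr0 _) (hr0 _)))).mp hsum
    exact fun I => this I (Finset.mem_univ I)
  intro I hI h
  have hS : ∑ h : ∀ i, A i, r (recomb I x h) * r (recomb Iᶜ x h) = 0 := by
    have := hterm I
    rcases mul_eq_zero.mp this with h' | h'
    · exact absurd h' (ne_of_gt hI)
    · exact h'
  exact (Finset.sum_eq_zero_iff_of_nonneg (fun h _ =>
    mul_nonneg (hr0 _) (hr0 _))).mp hS h (Finset.mem_univ h)

lemma equilibrium_pos (c : Finset L → ℝ) (hc : ∀ I, 0 ≤ c I)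
    (hsep : ∀ i j : L, i ≠ j →
      0 < ∑ I ∈ univ.filter (fun I : Finset L => i ∈ I ∧ j ∉ I), c I)
    [Nonempty L] (hA : ∀ i, Nonempty (A i))
    (r : (∀ i, A i) → ℝ) (hr0 : ∀ g, 0 ≤ r g)
    (hrm : ∀ (i : L) (a : A i), 0 < marg r i a) (hF : recF c r = 0) :
    ∀ g, 0 < r g := by
  -- positivity is preserved by recombination with any pattern of positive rate
  have hclose : ∀ I : Finset L, 0 < c I → ∀ g h : ∀ i, A i,
      0 < r g → 0 < r h → 0 < r (recomb I g h) := by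
    intro I hI g h hg hh
    by_contra hle
    have hz : r (recomb I g h) = 0 := le_antisymm (not_lt.mp hle) (hr0 _)
    have := equilibrium_zero_prop c hc r hr0 hF hz I hI (recomb Iᶜ g h)
    rw [recomb_left, recomb_right] at this
    exact absurd this (ne_of_gt (mul_pos hg hh))
  -- Boolean closure: singleton patterns preserve positivity
  have hsingle : ∀ (i : L) (g h : ∀ i, A i),
      0 < r g → 0 < r h → 0 < r (recomb ({i} : Finset L) g h) := by
    intro i
    refine singleton_closure c hc hsep
      (fun I => ∀ g h : ∀ i, A i, 0 < r g → 0 < r h → 0 < r (recomb I g h)) ?_ ?_ hclose i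
    · intro g h hg _; rwa [recomb_univ]
    · intro I J hPI hPJ g h hg hh
      rw [← recomb_inter₁]
      exact hPI _ _ (hPJ _ _ hg hh) hh
  -- from positive marginals, find support elements with prescribed alleles
  have hexists : ∀ (i : L) (a : A i), ∃ g : ∀ j, A j, g i = a ∧ 0 < r g := by
    intro i a
    by_contra hno
    push_neg at hno
    have : marg r i a = 0 := by
      unfold marg
      refine Finset.sum_eq_zero fun g _ => ?_
      by_cases hg : g i = a
      · rw [if_pos hg]
        exact le_antisymm (hno g hg) (hr0 g)
      · rw [if_neg hg]
    exact absurd this (ne_of_gt (hrm i a))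
  intro x
  -- build up support on larger and larger sets of loci
  have hbuild : ∀ K : Finset L, ∃ g : ∀ j, A j, 0 < r g ∧ ∀ i ∈ K, g i = x i := by
    intro K
    induction K using Finset.induction_on with
    | empty =>
        obtain ⟨i⟩ := (inferInstance : Nonempty L)
        obtain ⟨a⟩ := hA i
        obtain ⟨g, _, hg⟩ := hexists i a
        exact ⟨g, hg, fun j hj => absurd hj (Finset.notMem_empty j)⟩
    | @insert i K hiK ih =>
        obtain ⟨g, hg, hgK⟩ := ih
        obtain ⟨h, hhi, hh⟩ := hexists i (x i)
        refine ⟨recomb ({i} : Finset L) h g, hsingle i h g hh hg, ?_⟩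
        intro j hj
        rcases Finset.mem_insert.mp hj with rfl | hjK
        · simp [recomb, hhi]
        · have hji : j ≠ i := fun hji => hiK (hji ▸ hjK)
          simp only [recomb, Finset.mem_singleton]
          rw [if_neg hji]
          exact hgK j hjK
  obtain ⟨g, hg, hgx⟩ := hbuild univ
  have : g = x := funext fun i => hgx i (Finset.mem_univ i)
  rwa [this] at hg

/-! ### Equilibria are detailed balanced -/

lemma log_pair_nonneg {u v : ℝ} (hu : 0 < u) (hv : 0 < v) :
    0 ≤ (u - v) * (Real.log u - Real.log v) := by
  rcases lt_trichotomy u v with h | h | h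
  · have := Real.log_lt_log hu h; nlinarith
  · simp [h]
  · have := Real.log_lt_log hv h; nlinarith

lemma log_pair_eq {u v : ℝ} (hu : 0 < u) (hv : 0 < v)
    (hz : (u - v) * (Real.log u - Real.log v) = 0) : u = v := by
  rcases lt_trichotomy u v with h | h | h
  · have := Real.log_lt_log hu h; nlinarith
  · exact h
  · have := Real.log_lt_log hv h; nlinarith

lemma equilibrium_db (c : Finset L → ℝ) (hc : ∀ I, 0 ≤ c I)
    (r : (∀ i, A i) → ℝ) (hr : ∀ g, 0 < r g) (hF : recF c r = 0) :
    ∀ I : Finset L, 0 < c I → ∀ x h : ∀ i, A i,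
      r (recomb I x h) * r (recomb Iᶜ x h) = r x * r h := by
  set D : Finset L → ℝ := fun I => ∑ x : ∀ i, A i, ∑ h : ∀ i, A i,
    (r (recomb I x h) * r (recomb Iᶜ x h) - r x * r h) * Real.log (r x) with hD
  -- four representations of D
  have hT3 : ∀ I : Finset L, D I = ∑ x : ∀ i, A i, ∑ h : ∀ i, A i,
      (r x * r h - r (recomb I x h) * r (recomb Iᶜ x h)) * Real.log (r (recomb I x h)) := by
    intro I
    simp only [hD]
    calc ∑ x : ∀ i, A i, ∑ h : ∀ i, A i,
          (r (recomb I x h) * r (recomb Iᶜ x h) - r x * r h) * Real.log (r x)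
        = ∑ z : (∀ i, A i) × (∀ i, A i),
            (r (recomb I z.1 z.2) * r (recomb Iᶜ z.1 z.2) - r z.1 * r z.2) * Real.log (r z.1) := by
          rw [Fintype.sum_prod_type]
      _ = ∑ z : (∀ i, A i) × (∀ i, A i),
            (r z.1 * r z.2 - r (recomb I z.1 z.2) * r (recomb Iᶜ z.1 z.2))
              * Real.log (r (recomb I z.1 z.2)) := by
          apply Fintype.sum_equiv (phi I)
          intro z
          simp only [phi, Equiv.coe_fn_mk, recomb_left, recomb_right]
      _ = ∑ x : ∀ i, A i, ∑ h : ∀ i, A i,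
            (r x * r h - r (recomb I x h) * r (recomb Iᶜ x h)) * Real.log (r (recomb I x h)) := by
          rw [Fintype.sum_prod_type]
  have hswap : ∀ (F : (∀ i, A i) → (∀ i, A i) → ℝ),
      (∑ x : ∀ i, A i, ∑ h : ∀ i, A i, F x h) = ∑ x : ∀ i, A i, ∑ h : ∀ i, A i, F h x :=
    fun F => Finset.sum_comm
  have hsym : ∀ (I : Finset L) (x h : ∀ i, A i),
      r (recomb I h x) * r (recomb Iᶜ h x) = r (recomb I x h) * r (recomb Iᶜ x h) := by
    intro I x h
    rw [recomb_compl, recomb_compl]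
    ring
  have hT2 : ∀ I : Finset L, D I = ∑ x : ∀ i, A i, ∑ h : ∀ i, A i,
      (r (recomb I x h) * r (recomb Iᶜ x h) - r x * r h) * Real.log (r h) := by
    intro I
    simp only [hD]
    rw [hswap (fun x h => (r (recomb I x h) * r (recomb Iᶜ x h) - r x * r h) * Real.log (r x))]
    refine Finset.sum_congr rfl fun x _ => Finset.sum_congr rfl fun h _ => ?_
    rw [hsym]
    ring
  have hT4 : ∀ I : Finset L, D I = ∑ x : ∀ i, A i, ∑ h : ∀ i, A i,
      (r x * r h - r (recomb I x h) * r (recomb Iᶜ x h)) * Real.log (r (recomb Iᶜ x h)) := by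
    intro I
    rw [hT3 I]
    rw [hswap (fun x h => (r x * r h - r (recomb I x h) * r (recomb Iᶜ x h))
      * Real.log (r (recomb I x h)))]
    refine Finset.sum_congr rfl fun x _ => Finset.sum_congr rfl fun h _ => ?_
    rw [hsym, recomb_compl, mul_comm (r h) (r x)]
  -- 4 D I is minus a sum of nonnegative terms
  have hquad : ∀ I : Finset L, 4 * D I = ∑ x : ∀ i, A i, ∑ h : ∀ i, A i,
      -(((r (recomb I x h) * r (recomb Iᶜ x h)) - r x * r h)
        * (Real.log (r (recomb I x h) * r (recomb Iᶜ x h)) - Real.log (r x * r h))) := by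
    intro I
    have : 4 * D I = D I + D I + D I + D I := by ring
    rw [this]
    nth_rewrite 1 [hD]
    nth_rewrite 1 [hT2 I]
    nth_rewrite 1 [hT3 I]
    nth_rewrite 1 [hT4 I]
    rw [← Finset.sum_add_distrib, ← Finset.sum_add_distrib, ← Finset.sum_add_distrib]
    refine Finset.sum_congr rfl fun x _ => ?_
    rw [← Finset.sum_add_distrib, ← Finset.sum_add_distrib, ← Finset.sum_add_distrib]
    refine Finset.sum_congr rfl fun h _ => ?_
    rw [Real.log_mul (ne_of_gt (hr _)) (ne_of_gt (hr _)),
      Real.log_mul (ne_of_gt (hr _)) (ne_of_gt (hr _))]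
    ring
  have hDnonpos : ∀ I : Finset L, D I ≤ 0 := by
    intro I
    have h4 : 4 * D I ≤ 0 := by
      rw [hquad I]
      refine Finset.sum_nonpos fun x _ => Finset.sum_nonpos fun h _ => ?_
      rw [neg_nonpos]
      exact log_pair_nonneg (mul_pos (hr _) (hr _)) (mul_pos (hr _) (hr _))
    linarith
  -- the total dissipation vanishes at an equilibrium
  have hPhi : ∑ I : Finset L, c I * D I = 0 := by
    have hphi0 : ∑ x : ∀ i, A i, recF c r x * Real.log (r x) = 0 := by
      rw [hF]
      simp
    have hrepr : ∑ x : ∀ i, A i, recF c r x * Real.log (r x)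
        = (1/2) * ∑ I : Finset L, c I * D I := by
      calc ∑ x : ∀ i, A i, recF c r x * Real.log (r x)
          = ∑ x : ∀ i, A i, (1/2) * ∑ I : Finset L, c I *
              ∑ h : ∀ i, A i, (r (recomb I x h) * r (recomb Iᶜ x h) - r x * r h)
                * Real.log (r x) := by
            refine Finset.sum_congr rfl fun x _ => ?_
            rw [recF_eq, mul_assoc, Finset.sum_mul]
            congr 1
            refine Finset.sum_congr rfl fun I _ => ?_
            rw [mul_assoc, Finset.sum_mul]
        _ = (1/2) * ∑ I : Finset L, ∑ x : ∀ i, A i, c I *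
              ∑ h : ∀ i, A i, (r (recomb I x h) * r (recomb Iᶜ x h) - r x * r h)
                * Real.log (r x) := by
            rw [← Finset.mul_sum]
            congr 1
            exact Finset.sum_comm
        _ = (1/2) * ∑ I : Finset L, c I * D I := by
            simp only [hD]
            congr 1
            exact Finset.sum_congr rfl fun I _ => (Finset.mul_sum _ _ _).symm
    rw [hrepr] at hphi0
    linarith
  have hzero : ∀ I : Finset L, 0 < c I → D I = 0 := by
    intro I hI
    have hsum0 : ∑ J : Finset L, -(c J * D J) = 0 := by
      rw [Finset.sum_neg_distrib, hPhi, neg_zero]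
    have hterm : ∀ J : Finset L, -(c J * D J) = 0 := by
      have := (Finset.sum_eq_zero_iff_of_nonneg (fun J _ => by
        have h := mul_nonpos_of_nonneg_of_nonpos (hc J) (hDnonpos J)
        linarith)).mp hsum0
      exact fun J => this J (Finset.mem_univ J)
    have := hterm I
    have hcd : c I * D I = 0 := by linarith
    rcases mul_eq_zero.mp hcd with h' | h'
    · exact absurd h' (ne_of_gt hI)
    · exact h'
  intro I hI x h
  have hDI := hzero I hI
  have h4 : ∑ x : ∀ i, A i, ∑ h : ∀ i, A i,
      (((r (recomb I x h) * r (recomb Iᶜ x h)) - r x * r h)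
        * (Real.log (r (recomb I x h) * r (recomb Iᶜ x h)) - Real.log (r x * r h))) = 0 := by
    have h := hquad I
    rw [hDI, mul_zero] at h
    have h' := h.symm
    simpa [Finset.sum_neg_distrib, neg_eq_zero] using h' 
  have hxh := (Finset.sum_eq_zero_iff_of_nonneg (fun x _ => Finset.sum_nonneg fun h _ =>
      log_pair_nonneg (mul_pos (hr _) (hr _)) (mul_pos (hr _) (hr _)))).mp h4 x (Finset.mem_univ x)
  have := (Finset.sum_eq_zero_iff_of_nonneg (fun h _ =>
      log_pair_nonneg (mul_pos (hr _) (hr _)) (mul_pos (hr _) (hr _)))).mp hxh h (Finset.mem_univ h)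
  exact log_pair_eq (mul_pos (hr _) (hr _)) (mul_pos (hr _) (hr _)) this

/-! ### From detailed balance to the product form -/

lemma marg_sub (p q : (∀ i, A i) → ℝ) (i : L) (a : A i) :
    marg (p - q) i a = marg p i a - marg q i a := by
  unfold marg
  rw [← Finset.sum_sub_distrib]
  exact Finset.sum_congr rfl fun g _ => by by_cases hg : g i = a <;> simp [hg]

lemma db_inter (r : (∀ i, A i) → ℝ) (hr : ∀ g, 0 < r g) {I J : Finset L}
    (hI : ∀ g h, r (recomb I g h) * r (recomb Iᶜ g h) = r g * r h)
    (hJ : ∀ g h, r (recomb J g h) * r (recomb Jᶜ g h) = r g * r h) :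
    ∀ g h, r (recomb (I ∩ J) g h) * r (recomb (I ∩ J)ᶜ g h) = r g * r h := by
  intro g h
  have e1 := hI (recomb J g h) h
  rw [recomb_inter₁, recomb_inter₂] at e1
  have e2 := hJ g h
  have e3 := hJ (recomb (I ∩ J)ᶜ g h) h
  rw [recomb_inter₃, recomb_inter₄] at e3
  have hF : (0:ℝ) < r (recomb (Iᶜ ∩ J) g h) * (r (recomb Jᶜ g h) * r h) :=
    mul_pos (hr _) (mul_pos (hr _) (hr _))
  apply mul_right_cancel₀ (ne_of_gt hF)
  linear_combination (r (recomb (I ∩ J)ᶜ g h) * r (recomb Jᶜ g h) * r h) * e1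
    + (r h * r (recomb (I ∩ J)ᶜ g h) * r h) * e2 - (r g * r h * r h) * e3

lemma db_singleton (c : Finset L → ℝ) (hc : ∀ I, 0 ≤ c I)
    (hsep : ∀ i j : L, i ≠ j →
      0 < ∑ I ∈ univ.filter (fun I : Finset L => i ∈ I ∧ j ∉ I), c I)
    (r : (∀ i, A i) → ℝ) (hr : ∀ g, 0 < r g)
    (hDB : ∀ I, 0 < c I → ∀ g h, r (recomb I g h) * r (recomb Iᶜ g h) = r g * r h) :
    ∀ (i : L) (g h : ∀ j, A j),
      r (recomb ({i} : Finset L) g h) * r (recomb ({i} : Finset L)ᶜ g h) = r g * r h := by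
  intro i
  refine singleton_closure c hc hsep
    (fun I => ∀ g h, r (recomb I g h) * r (recomb Iᶜ g h) = r g * r h) ?_
    (fun I J hI hJ => db_inter r hr hI hJ) hDB i
  intro g h
  rw [recomb_univ, Finset.compl_univ, recomb_empty, mul_comm]

lemma db_rep (r : (∀ i, A i) → ℝ) (hr : ∀ g, 0 < r g) (w₀ : ∀ i, A i)
    (hDB1 : ∀ (i : L) (g h : ∀ j, A j),
      r (recomb ({i} : Finset L) g h) * r (recomb ({i} : Finset L)ᶜ g h) = r g * r h) :
    ∀ g, r g = (∏ i, r (Function.update w₀ i (g i)) / r w₀) * r w₀ := by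
  have claim : ∀ K : Finset L, ∀ g,
      r g = (∏ i ∈ K, r (Function.update w₀ i (g i)) / r w₀) * r (recomb K w₀ g) := by
    intro K
    induction K using Finset.induction_on with
    | empty => intro g; rw [recomb_empty]; simp
    | @insert i K hiK ih =>
        intro g
        have e := hDB1 i (recomb K w₀ g) w₀
        have h1 : recomb ({i} : Finset L) (recomb K w₀ g) w₀ = Function.update w₀ i (g i) := by
          funext j
          by_cases hj : j = i
          · subst hj
            simp [recomb, hiK]
          · simp [recomb, hj, Function.update_of_ne hj]
        have h2 : recomb ({i} : Finset L)ᶜ (recomb K w₀ g) w₀ = recomb (insert i K) w₀ g := by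
          funext j
          by_cases hj : j = i
          · subst hj
            simp [recomb]
          · by_cases hjK : j ∈ K <;>
              simp [recomb, hj, hjK]
        rw [h1, h2] at e
        rw [ih g, Finset.prod_insert hiK]
        have hkey : r (recomb K w₀ g)
            = r (Function.update w₀ i (g i)) / r w₀ * r (recomb (insert i K) w₀ g) := by
          rw [div_mul_eq_mul_div, eq_div_iff (ne_of_gt (hr w₀))]
          linear_combination -e
        rw [hkey]
        ring
  intro g
  have := claim univ g
  rwa [recomb_univ] at this

lemma sum_mul_comp (v : (∀ i, A i) → ℝ) (i : L) (u : A i → ℝ) :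
    ∑ x : ∀ j, A j, v x * u (x i) = ∑ a : A i, marg v i a * u a := by
  unfold marg
  calc ∑ x : ∀ j, A j, v x * u (x i)
      = ∑ x : ∀ j, A j, ∑ a : A i, (if x i = a then v x * u a else 0) := by
        refine Finset.sum_congr rfl fun x _ => ?_
        rw [Finset.sum_ite_eq]
        simp
    _ = ∑ a : A i, ∑ x : ∀ j, A j, (if x i = a then v x * u a else 0) := Finset.sum_comm
    _ = ∑ a : A i, (∑ x : ∀ j, A j, if x i = a then v x else 0) * u a := by
        refine Finset.sum_congr rfl fun a _ => ?_
        rw [Finset.sum_mul]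
        exact Finset.sum_congr rfl fun x _ => by by_cases hx : x i = a <;> simp [hx]

lemma affine_pairing [Nonempty L] (v : (∀ i, A i) → ℝ)
    (hm : ∀ (i : L) (a : A i), marg v i a = 0)
    (f : ∀ i, A i → ℝ) (C : ℝ) :
    ∑ x : ∀ j, A j, v x * ((∑ i, f i (x i)) + C) = 0 := by
  have hvs : ∑ x : ∀ j, A j, v x = 0 := by
    obtain ⟨i⟩ := (inferInstance : Nonempty L)
    rw [sum_eq_sum_marg v i]
    exact Finset.sum_eq_zero fun a _ => hm i a
  have per : ∀ x : ∀ j, A j, v x * ((∑ i, f i (x i)) + C)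
      = (∑ i, v x * f i (x i)) + v x * C := fun x => by rw [mul_add, Finset.mul_sum]
  simp only [per]
  rw [Finset.sum_add_distrib, Finset.sum_comm]
  have h1 : ∀ i : L, ∑ x : ∀ j, A j, v x * f i (x i) = 0 := fun i => by
    rw [sum_mul_comp]
    exact Finset.sum_eq_zero fun a _ => by rw [hm i a, zero_mul]
  simp only [h1]
  rw [← Finset.sum_mul, hvs]
  simp

lemma gibbs_eq [Nonempty L] (r q : (∀ i, A i) → ℝ)
    (hr : ∀ g, 0 < r g) (hq : ∀ g, 0 < q g)
    (hm : ∀ (i : L) (a : A i), marg r i a = marg q i a)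
    (fr fq : ∀ i, A i → ℝ) (Cr Cq : ℝ)
    (hlr : ∀ x, Real.log (r x) = (∑ i, fr i (x i)) + Cr)
    (hlq : ∀ x, Real.log (q x) = (∑ i, fq i (x i)) + Cq) : r = q := by
  have hv : ∀ (i : L) (a : A i), marg (r - q) i a = 0 := by
    intro i a
    rw [marg_sub, hm i a, sub_self]
  have key : ∑ x : ∀ j, A j, (r x - q x) * (Real.log (r x) - Real.log (q x)) = 0 := by
    have e : ∀ x : ∀ j, A j, (r x - q x) * (Real.log (r x) - Real.log (q x))
        = (r - q) x * ((∑ i, (fr i (x i) - fq i (x i))) + (Cr - Cq)) := fun x => by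
      rw [hlr, hlq, Finset.sum_sub_distrib]
      simp only [Pi.sub_apply]
      ring
    simp only [e]
    exact affine_pairing (r - q) hv (fun i a => fr i a - fq i a) (Cr - Cq)
  funext x
  have each := (Finset.sum_eq_zero_iff_of_nonneg (fun x _ =>
    log_pair_nonneg (hr x) (hq x))).mp key x (Finset.mem_univ x)
  exact log_pair_eq (hr x) (hq x) each

lemma log_rep_of_rep (r : (∀ i, A i) → ℝ) (F : ∀ i, A i → ℝ)
    (hF : ∀ i a, 0 < F i a) (C : ℝ) (hC : 0 < C)
    (hrep : ∀ x, r x = (∏ i, F i (x i)) * C) :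
    ∀ x, Real.log (r x) = (∑ i, Real.log (F i (x i))) + Real.log C := by
  intro x
  rw [hrep x, Real.log_mul ?_ (ne_of_gt hC)]
  · rw [Real.log_prod]
    intro i _
    exact ne_of_gt (hF i (x i))
  · exact ne_of_gt (Finset.prod_pos fun i _ => hF i (x i))

/-! ### The product measure is an equilibrium -/

lemma prod_db (f : ∀ i, A i → ℝ) (I : Finset L) (g h : ∀ i, A i) :
    (∏ i, f i (g i)) * (∏ i, f i (h i))
      = (∏ i, f i (recomb I g h i)) * (∏ i, f i (recomb Iᶜ g h i)) := by
  rw [← Finset.prod_mul_distrib, ← Finset.prod_mul_distrib]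
  refine Finset.prod_congr rfl fun i _ => ?_
  by_cases hi : i ∈ I
  · simp [recomb, hi]
  · simp [recomb, hi, mul_comm]

lemma recF_prod_zero (c : Finset L → ℝ) (f : ∀ i, A i → ℝ) :
    recF c (fun x => ∏ i, f i (x i)) = 0 := by
  funext x
  rw [recF_eq]
  have hz : ∀ I : Finset L, (∑ h : ∀ i, A i,
      ((fun x => ∏ i, f i (x i)) (recomb I x h) * (fun x => ∏ i, f i (x i)) (recomb Iᶜ x h)
        - (fun x => ∏ i, f i (x i)) x * (fun x => ∏ i, f i (x i)) h)) = 0 := by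
    intro I
    refine Finset.sum_eq_zero fun h _ => ?_
    simp only []
    rw [← prod_db]
    ring
  simp only [hz, mul_zero, Finset.sum_const_zero, Pi.zero_apply]



end RecombAux

/-- **Unique positive detailed-balancing equilibrium in the stoichiometric class
(Proposition 2).** Under the standing assumption, if `p⁰ ∈ S_𝓖` has all marginals
positive, then the stoichiometric compatibility class `S(p⁰) = (p⁰ + S) ∩ ℝ^𝓖₊` contains
exactly one equilibrium of the recombination dynamics; it is strictly positive and
detailed-balancing, and `S(p⁰)` contains no equilibrium on the boundary of `ℝ^𝓖₊`. -/
theorem unique_positive_equilibrium_in_stoichiometric_class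
    {L : Type} [Fintype L] [DecidableEq L] [Nonempty L]
    (A : L → Type) [∀ i, Fintype (A i)] [∀ i, DecidableEq (A i)]
    (hA : ∀ i, 2 ≤ Fintype.card (A i))
    (c : Finset L → ℝ) (hc : ∀ I, 0 ≤ c I) (hcsym : ∀ I, c I = c Iᶜ)
    (hsep : ∀ i j : L, i ≠ j →
      0 < ∑ I ∈ univ.filter (fun I : Finset L => i ∈ I ∧ j ∉ I), c I)
    (p₀ : (∀ i, A i) → ℝ) (hp0 : ∀ g, 0 ≤ p₀ g) (hp1 : ∑ g : ∀ i, A i, p₀ g = 1)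
    (hm : ∀ (i : L) (a : A i), 0 < marg p₀ i a) :
    (∃ q : (∀ i, A i) → ℝ,
      ((∀ g, 0 ≤ q g) ∧ q - p₀ ∈ stoichSpan A c ∧ recF c q = 0) ∧
      (∀ g, 0 < q g) ∧
      (∀ (g h : ∀ i, A i) (I : Finset L),
        q g * q h = q (recomb I g h) * q (recomb Iᶜ g h)) ∧
      (∀ r : (∀ i, A i) → ℝ, (∀ g, 0 ≤ r g) → r - p₀ ∈ stoichSpan A c →
        recF c r = 0 → r = q)) ∧
    (∀ r : (∀ i, A i) → ℝ, (∀ g, 0 ≤ r g) → r - p₀ ∈ stoichSpan A c →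
      (∃ g, r g = 0) → recF c r ≠ 0) := by
  classical
  have hAne : ∀ i, Nonempty (A i) := fun i =>
    Fintype.card_pos_iff.mp (lt_of_lt_of_le (by norm_num) (hA i))
  let w₀ : ∀ i, A i := fun i => (hAne i).some
  set q : (∀ i, A i) → ℝ := fun x => ∏ i, marg p₀ i (x i) with hqdef
  have hq0 : ∀ x, 0 < q x := fun x => Finset.prod_pos fun i _ => hm i (x i)
  have hqmarg : ∀ (i : L) (a : A i), marg q i a = marg p₀ i a := fun i a =>
    RecombAux.marg_prod p₀ hp1 i a (Function.update w₀ i a) (Function.update_self i a w₀)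
  have hqspan : q - p₀ ∈ stoichSpan A c := RecombAux.prod_sub_mem c hc hsep p₀ hp1
  have hqF : recF c q = 0 := RecombAux.recF_prod_zero c (fun i a => marg p₀ i a)
  have hclassmarg : ∀ r : (∀ i, A i) → ℝ, r - p₀ ∈ stoichSpan A c →
      ∀ (i : L) (a : A i), marg r i a = marg p₀ i a := by
    intro r hrs i a
    have h := RecombAux.span_marg_zero c hrs i a
    rw [RecombAux.marg_sub] at h
    linarith
  have hbdry : ∀ r : (∀ i, A i) → ℝ, (∀ g, 0 ≤ r g) → r - p₀ ∈ stoichSpan A c →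
      recF c r = 0 → ∀ g, 0 < r g := by
    intro r h0 hspan hFr
    exact RecombAux.equilibrium_pos c hc hsep hAne r h0
      (fun i a => by rw [hclassmarg r hspan i a]; exact hm i a) hFr
  have huniq : ∀ r : (∀ i, A i) → ℝ, (∀ g, 0 ≤ r g) → r - p₀ ∈ stoichSpan A c →
      recF c r = 0 → r = q := by
    intro r h0 hspan hFr
    have hrpos := hbdry r h0 hspan hFr
    have hDB := RecombAux.equilibrium_db c hc r hrpos hFr
    have hDB1 := RecombAux.db_singleton c hc hsep r hrpos hDB
    have hrep := RecombAux.db_rep r hrpos w₀ hDB1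
    refine RecombAux.gibbs_eq r q hrpos hq0
      (fun i a => by rw [hclassmarg r hspan i a, hqmarg i a])
      (fun i a => Real.log (r (Function.update w₀ i a) / r w₀))
      (fun i a => Real.log (marg p₀ i a))
      (Real.log (r w₀)) (Real.log 1) ?_ ?_
    · exact RecombAux.log_rep_of_rep r
        (fun i a => r (Function.update w₀ i a) / r w₀)
        (fun i a => div_pos (hrpos _) (hrpos w₀)) (r w₀) (hrpos w₀) hrep
    · exact RecombAux.log_rep_of_rep q (fun i a => marg p₀ i a)
        (fun i a => hm i a) 1 one_pos (fun x => by rw [hqdef]; ring)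
  refine ⟨⟨q, ⟨fun g => le_of_lt (hq0 g), hqspan, hqF⟩, hq0,
    (fun g h I => RecombAux.prod_db (fun i a => marg p₀ i a) I g h), huniq⟩, ?_⟩
  rintro r h0 hspan ⟨g, hg⟩ hFr
  exact (ne_of_gt (hbdry r h0 hspan hFr g)) hg
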